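/- For every real t ≥ 0, ∫_0^t n·e^{−n} dn + (t+1)·e^{−t} = 1; and ∫_0^1 n·e^{−n} dn + e^{−1} = 1 − e^{−1}. Equivalently: against the adversary density g(n) = e^{−n} on [0,∞), the expected cost of the threshold-t policy equals 1 for every t ≥ 0, and the expected offline optimal cost equals 1 − 1/e. -/

import Mathlib

open MeasureTheory

lemma expneg_intOn (a : ℝ) : IntegrableOn (fun n : ℝ => Real.exp (-n)) (Set.Ioi a) := by
  simpa using exp_neg_integrableOn_Ioi a (b := 1) one_pos

lemma key (t : ℝ) :
    (∫ n in (0 : ℝ)..t, n * Real.exp (-n)) = 1 - (t + 1) * Real.exp (-t) := by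
  have hd : ∀ x : ℝ, HasDerivAt (fun n : ℝ => -(n + 1) * Real.exp (-n))
      (x * Real.exp (-x)) x := by
    intro x
    have h1 : HasDerivAt (fun n : ℝ => Real.exp (-n)) (-Real.exp (-x)) x := by
      simpa using (hasDerivAt_neg x).exp
    have h2 : HasDerivAt (fun n : ℝ => -(n + 1)) (-1 : ℝ) x := by
      exact ((hasDerivAt_id' x).add_const 1).neg
    have := h2.mul h1
    exact this.congr_deriv (by ring)
  have hInt : IntervalIntegrable (fun n : ℝ => n * Real.exp (-n)) volume 0 t :=
    (continuous_id.mul (Real.continuous_exp.comp continuous_neg)).intervalIntegrable _ _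
  rw [intervalIntegral.integral_eq_sub_of_hasDerivAt (fun x _ => hd x) hInt]
  simp [Real.exp_zero]
  ring

lemma key2 (t c : ℝ) (ht : 0 ≤ t) (f : ℝ → ℝ)
    (hf1 : ∀ n ∈ Set.Ioo (0:ℝ) t, f n = n)
    (hf2 : ∀ n ∈ Set.Ioi t, f n = c) :
    (∫ n in Set.Ioi (0 : ℝ), f n * Real.exp (-n))
      = 1 - (t + 1) * Real.exp (-t) + c * Real.exp (-t) := by
  have hne : ∀ᵐ n : ℝ ∂volume, n ≠ t := by
    rw [ae_iff]
    convert Real.volume_singleton (a := t) using 2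
    ext x; simp
  have hae1 : (fun n => f n * Real.exp (-n)) =ᵐ[volume.restrict (Set.Ioc 0 t)]
      (fun n => n * Real.exp (-n)) := by
    filter_upwards [ae_restrict_mem measurableSet_Ioc, ae_restrict_of_ae hne] with n hn hn'
    rw [hf1 n ⟨hn.1, lt_of_le_of_ne hn.2 hn'⟩]
  have hae2 : (fun n => f n * Real.exp (-n)) =ᵐ[volume.restrict (Set.Ioi t)]
      (fun n => c * Real.exp (-n)) := by
    filter_upwards [ae_restrict_mem measurableSet_Ioi] with n hn
    rw [hf2 n hn]
  have hi1 : IntegrableOn (fun n => f n * Real.exp (-n)) (Set.Ioc 0 t) := by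
    apply IntegrableOn.congr_fun_ae _ hae1.symm
    exact ((continuous_id.mul (Real.continuous_exp.comp continuous_neg)).integrableOn_Ioc)
  have hi2 : IntegrableOn (fun n => f n * Real.exp (-n)) (Set.Ioi t) :=
    IntegrableOn.congr_fun_ae ((expneg_intOn t).const_mul c) hae2.symm
  have hdisj : Disjoint (Set.Ioc (0:ℝ) t) (Set.Ioi t) := by
    rw [Set.disjoint_left]; intro a ha ha'; exact absurd ha.2 (not_le.mpr ha')
  calc (∫ n in Set.Ioi (0 : ℝ), f n * Real.exp (-n))
      = (∫ n in Set.Ioc (0:ℝ) t, f n * Real.exp (-n))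
        + ∫ n in Set.Ioi t, f n * Real.exp (-n) := by
        rw [← setIntegral_union hdisj measurableSet_Ioi hi1 hi2,
          Set.Ioc_union_Ioi_eq_Ioi ht]
    _ = (∫ n in (0:ℝ)..t, n * Real.exp (-n)) + ∫ n in Set.Ioi t, c * Real.exp (-n) := by
        rw [integral_congr_ae hae1, integral_congr_ae hae2,
          intervalIntegral.integral_of_le ht]
    _ = _ := by
        rw [key, MeasureTheory.integral_const_mul, integral_exp_neg_Ioi]

theorem stmt12 :
    (∀ t : ℝ, 0 ≤ t →
      (∫ n in (0 : ℝ)..t, n * Real.exp (-n)) + (t + 1) * Real.exp (-t) = 1) ∧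
    ((∫ n in (0 : ℝ)..(1 : ℝ), n * Real.exp (-n)) + Real.exp (-1) = 1 - Real.exp (-1)) ∧
    (∀ t : ℝ, 0 ≤ t →
      (∫ n in Set.Ioi (0 : ℝ), (if n < t then n else t + 1) * Real.exp (-n)) = 1) ∧
    ((∫ n in Set.Ioi (0 : ℝ), min n 1 * Real.exp (-n)) = 1 - Real.exp (-1)) := by
  refine ⟨fun t _ => by rw [key]; ring, by rw [key]; ring, ?_, ?_⟩
  · intro t ht
    have := key2 t (t+1) ht _ (fun n hn => if_pos hn.2)
      (fun n hn => if_neg (not_lt.mpr (le_of_lt hn)))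
    rw [this]; ring
  · have := key2 1 1 zero_le_one (fun n => min n 1)
      (fun n hn => min_eq_left hn.2.le) (fun n hn => min_eq_right (le_of_lt hn))
    rw [this]; ring
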